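/- Let G be a topological group containing a subspace X homeomorphic to a subspace of the Sorgenfrey line, and suppose X × X contains a discrete subspace of cardinality κ⁺ (the successor of an infinite cardinal κ). Then G contains a discrete subspace of cardinality κ⁺; in particular, the spread of G is strictly greater than κ. -/

import Mathlib

open Set Topology

def SorgenfreyLine : Type := ℝ

notation "ℝₗ" => SorgenfreyLine

noncomputable instance : Field ℝₗ := inferInstanceAs (Field ℝ)

noncomputable instance : LinearOrder ℝₗ := inferInstanceAs (LinearOrder ℝ)

instance : IsStrictOrderedRing ℝₗ := inferInstanceAs (IsStrictOrderedRing ℝ)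

instance : TopologicalSpace ℝₗ :=
  TopologicalSpace.generateFrom {s : Set ℝₗ | ∃ a b : ℝₗ, a < b ∧ s = Set.Ico a b}

/-- The spread of a topological space: the supremum of cardinalities of discrete subspaces. -/
noncomputable def spread (X : Type*) [TopologicalSpace X] : Cardinal :=
  sSup {c : Cardinal | ∃ D : Set X, DiscreteTopology D ∧ Cardinal.mk D = c}

def Cometrizable (Y : Type*) [t : TopologicalSpace Y] : Prop :=
  ∃ τ : TopologicalSpace Y, t ≤ τ ∧ @TopologicalSpace.MetrizableSpace Y τ ∧
    ∀ y : Y, ∀ U ∈ nhds y, ∃ V ∈ nhds y, V ⊆ U ∧ IsClosed[τ] V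

def IsKDense {X : Type*} [TopologicalSpace X] (D : Set X) : Prop :=
  ∀ K : Set X, IsCompact K → ∃ K' : Set X, IsCompact K' ∧ K ⊆ K' ∧ K' ⊆ closure (D ∩ K')

def KSeparable (X : Type*) [TopologicalSpace X] : Prop :=
  ∃ D : Set X, D.Countable ∧ IsKDense D

open Filter

set_option linter.unusedSectionVars false
set_option linter.unusedVariables false

instance : Archimedean ℝₗ := inferInstanceAs (Archimedean ℝ)

theorem SL.nhds_basis_Ico (a : ℝₗ) : (𝓝 a).HasBasis (a < ·) (Ico a ·) := by
  rw [TopologicalSpace.nhds_generateFrom]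
  have hd : DirectedOn ((fun s : Set ℝₗ => s) ⁻¹'o (· ⊇ ·))
      {s : Set ℝₗ | a ∈ s ∧ s ∈ {s : Set ℝₗ | ∃ x y : ℝₗ, x < y ∧ s = Set.Ico x y}} := by
    rintro s ⟨has, x₁, y₁, hxy₁, rfl⟩ t ⟨hat, x₂, y₂, hxy₂, rfl⟩
    refine ⟨Ico (max x₁ x₂) (min y₁ y₂), ⟨?_, max x₁ x₂, min y₁ y₂, ?_, rfl⟩, ?_, ?_⟩
    · exact ⟨max_le has.1 hat.1, lt_min has.2 hat.2⟩
    · exact lt_of_le_of_lt (max_le has.1 hat.1) (lt_min has.2 hat.2)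
    · exact fun z hz => ⟨le_trans (le_max_left _ _) hz.1, lt_of_lt_of_le hz.2 (min_le_left _ _)⟩
    · exact fun z hz => ⟨le_trans (le_max_right _ _) hz.1, lt_of_lt_of_le hz.2 (min_le_right _ _)⟩
  have hne : {s : Set ℝₗ | a ∈ s ∧ s ∈ {s : Set ℝₗ | ∃ x y : ℝₗ, x < y ∧ s = Set.Ico x y}}.Nonempty := by
    refine ⟨Ico (a - 1) (a + 1), ⟨⟨by linarith, by linarith⟩, a - 1, a + 1, by linarith, rfl⟩⟩
  have hb := hasBasis_biInf_principal hd hne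
  refine hb.to_hasBasis ?_ ?_
  · rintro s ⟨has, x, y, hxy, rfl⟩
    exact ⟨y, has.2, fun z hz => ⟨le_trans has.1 hz.1, hz.2⟩⟩
  · intro b hab
    exact ⟨Ico a b, ⟨⟨le_refl a, hab⟩, a, b, hab, rfl⟩, Subset.rfl⟩

theorem SL.mem_nhds {a : ℝₗ} {U : Set ℝₗ} : U ∈ 𝓝 a ↔ ∃ δ : ℝₗ, 0 < δ ∧ Ico a (a + δ) ⊆ U := by
  rw [(SL.nhds_basis_Ico a).mem_iff]
  constructor
  · rintro ⟨b, hab, hsub⟩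
    exact ⟨b - a, by linarith, by rwa [add_sub_cancel]⟩
  · rintro ⟨δ, hδ, hsub⟩
    exact ⟨a + δ, by linarith, hsub⟩

theorem SL.Ico_mem_nhds {a b : ℝₗ} (h : a < b) : Ico a b ∈ 𝓝 a :=
  (SL.nhds_basis_Ico a).mem_of_mem h


-- uncountable pigeonhole
theorem big_fiber {α β : Type} [Countable β] {κ : Cardinal.{0}}
    (hκ : Cardinal.aleph0 ≤ κ) (T : Set α) (hT : Order.succ κ ≤ Cardinal.mk T) (f : α → β) :
    ∃ b : β, Order.succ κ ≤ Cardinal.mk {a ∈ T | f a = b} := by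
  by_contra hcon
  push_neg at hcon
  have hle : ∀ b : β, Cardinal.mk {a ∈ T | f a = b} ≤ κ := by
    intro b
    exact Order.lt_succ_iff.mp (hcon b)
  have h1 : Cardinal.mk T ≤ Cardinal.sum (fun b : β => Cardinal.mk {a ∈ T | f a = b}) := by
    rw [← Cardinal.mk_sigma]
    have e0 : T ≃ Σ b : β, {a : T // f a.1 = b} := (Equiv.sigmaFiberEquiv (fun a : T => f a.1)).symm
    have e1 : ∀ b : β, {a : T // f a.1 = b} ≃ {a : α // a ∈ T ∧ f a = b} := fun b =>
      Equiv.subtypeSubtypeEquivSubtypeInter (· ∈ T) (fun a => f a = b)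
    exact le_of_eq (Cardinal.mk_congr (e0.trans (Equiv.sigmaCongrRight e1)))
  have h2 : Cardinal.sum (fun b : β => Cardinal.mk {a ∈ T | f a = b}) ≤ Cardinal.mk β * κ := by
    calc Cardinal.sum (fun b : β => Cardinal.mk {a ∈ T | f a = b})
        ≤ Cardinal.sum (fun _ : β => κ) := Cardinal.sum_le_sum _ _ hle
      _ = Cardinal.mk β * κ := by rw [Cardinal.sum_const']
  have h3 : Cardinal.mk β * κ ≤ κ := by
    calc Cardinal.mk β * κ ≤ Cardinal.aleph0 * κ :=
          mul_le_mul' Cardinal.mk_le_aleph0 le_rfl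
      _ = κ := by
          rw [Cardinal.mul_eq_max le_rfl hκ]
          exact max_eq_right hκ
  have := (hT.trans (h1.trans (h2.trans h3)))
  exact absurd this (not_le.mpr (Order.lt_succ κ))


theorem nonempty_of_succ_le {α : Type} {κ : Cardinal.{0}} {s : Set α}
    (h : Order.succ κ ≤ Cardinal.mk s) : s.Nonempty := by
  rw [nonempty_iff_ne_empty]
  rintro rfl
  rw [Cardinal.mk_emptyCollection] at h
  exact absurd h (not_le.mpr (lt_of_le_of_lt (Cardinal.zero_le κ) (Order.lt_succ κ)))



section helpers
variable {G : Type u} [Group G] [TopologicalSpace G] [IsTopologicalGroup G]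
  {X : Set ℝₗ} {S : Set G} (e : S ≃ₜ X)

/-- the canonical map X → G -/
def phi (e : S ≃ₜ X) : X → G := fun p => ((e.symm p : S) : G)

theorem phi_continuous : Continuous (phi e) :=
  continuous_subtype_val.comp e.symm.continuous

/-- separation: a G-neighborhood of φ z meeting the image only to the right -/
theorem phi_sep (z : X) : ∃ V ∈ 𝓝 (phi e z), ∀ w : X, phi e w ∈ V → (z : ℝₗ) ≤ (w : ℝₗ) := by
  have hW : (Subtype.val ⁻¹' Ico (z : ℝₗ) ((z : ℝₗ) + 1) : Set X) ∈ 𝓝 z := by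
    rw [nhds_subtype]
    exact preimage_mem_comap (SL.Ico_mem_nhds (by linarith [lt_add_one (z : ℝₗ)]))
  have hW' : (⇑e ⁻¹' (Subtype.val ⁻¹' Ico (z : ℝₗ) ((z : ℝₗ) + 1)) : Set S) ∈ 𝓝 (e.symm z) := by
    have := e.continuous.continuousAt (x := e.symm z)
    apply this
    rwa [e.apply_symm_apply]
  rw [mem_nhds_subtype] at hW'
  obtain ⟨V, hV, hVsub⟩ := hW'
  refine ⟨V, hV, fun w hw => ?_⟩
  have : e.symm w ∈ (Subtype.val ⁻¹' V : Set S) := hw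
  have h2 := hVsub this
  simp only [mem_preimage, e.apply_symm_apply] at h2
  exact h2.1

/-- tendsto: if the Sorgenfrey coordinates converge, the G-points converge -/
theorem phi_tendsto {ι : Type*} {F : Filter ι} {m : ι → X} {z : X}
    (hm : Tendsto (fun i => ((m i : ℝₗ))) F (𝓝 (z : ℝₗ))) :
    Tendsto (fun i => phi e (m i)) F (𝓝 (phi e z)) := by
  have h1 : Tendsto m F (𝓝 z) := tendsto_subtype_rng.mpr hm
  exact ((phi_continuous e).continuousAt.tendsto).comp h1

theorem phi_injective : Function.Injective (phi e) := fun w w' h =>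
  e.symm.injective (Subtype.val_injective h)
/-- first coordinate, as a Sorgenfrey real -/
def xc {X : Set ℝₗ} (p : X × X) : ℝₗ := (p.1 : ℝₗ)
/-- second coordinate, as a Sorgenfrey real -/
def yc {X : Set ℝₗ} (p : X × X) : ℝₗ := (p.2 : ℝₗ)
/-- the product point in the group -/
def cmap (e : S ≃ₜ X) (p : X × X) : G := phi e p.1 * phi e p.2

theorem claimA (Γ₂ : Set (X × X))
    (hAC : ∀ p ∈ Γ₂, ∀ q ∈ Γ₂, xc p < xc q → yc q < yc p) (p : X × X) (hp : p ∈ Γ₂) :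
    ∃ N ∈ 𝓝 (cmap e p), ∃ δ : ℝₗ, 0 < δ ∧
      ∀ q ∈ Γ₂, xc p < xc q → xc q < xc p + δ → cmap e q ∉ N := by
  by_contra hcon
  push_neg at hcon
  set F : Filter (X × X) :=
    𝓟 {q | q ∈ Γ₂ ∧ xc p < xc q} ⊓ comap xc (𝓝 (xc p)) ⊓ comap (cmap e) (𝓝 (cmap e p)) with hF
  have hFne : F.NeBot := by
    rw [← forall_mem_nonempty_iff_neBot]
    intro s hs
    rw [hF, mem_inf_iff] at hs
    obtain ⟨t₁, ht₁, t₂, ht₂, rfl⟩ := hs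
    rw [mem_inf_iff] at ht₁
    obtain ⟨u, hu, v, hv, rfl⟩ := ht₁
    rw [mem_principal] at hu
    obtain ⟨V, hV, hVv⟩ := mem_comap.mp hv
    obtain ⟨δ, hδ, hIco⟩ := SL.mem_nhds.mp hV
    obtain ⟨N, hN, hNt⟩ := mem_comap.mp ht₂
    obtain ⟨q, hq, hq1, hq2, hq3⟩ := hcon N hN δ hδ
    refine ⟨q, ⟨hu ⟨hq, hq1⟩, hVv ?_⟩, hNt hq3⟩
    exact mem_preimage.mpr (hIco ⟨le_of_lt hq1, hq2⟩)
  have hc : Tendsto (cmap e) F (𝓝 (cmap e p)) := tendsto_iff_comap.mpr inf_le_right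
  have hx : Tendsto xc F (𝓝 (xc p)) := tendsto_iff_comap.mpr (inf_le_left.trans inf_le_right)
  have ha : Tendsto (fun q : X × X => phi e q.1) F (𝓝 (phi e p.1)) := phi_tendsto e hx
  have hb : Tendsto (fun q : X × X => phi e q.2) F (𝓝 (phi e p.2)) := by
    have h1 : Tendsto (fun q : X × X => (phi e q.1)⁻¹ * cmap e q) F
        (𝓝 ((phi e p.1)⁻¹ * cmap e p)) := ha.inv.mul hc
    simpa only [cmap, inv_mul_cancel_left] using h1
  obtain ⟨V, hV, hVsep⟩ := phi_sep e p.2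
  have hbV : {q : X × X | phi e q.2 ∈ V} ∈ F := hb hV
  have hA : {q : X × X | q ∈ Γ₂ ∧ xc p < xc q} ∈ F :=
    (inf_le_left.trans inf_le_left : F ≤ 𝓟 _) (mem_principal_self _)
  obtain ⟨q, ⟨hqΓ, hqx⟩, hqV⟩ := Filter.nonempty_of_mem (inter_mem hA hbV)
  have h1 : yc p ≤ yc q := hVsep q.2 hqV
  have h2 : yc q < yc p := hAC p hp q hqΓ hqx
  exact absurd h1 (not_le.mpr h2)

theorem claimB (Γ₂ : Set (X × X))
    (hAC : ∀ p ∈ Γ₂, ∀ q ∈ Γ₂, xc p < xc q → yc q < yc p) (p : X × X) (hp : p ∈ Γ₂)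
    (hgood : ∀ η : ℝₗ, 0 < η → ∃ q ∈ Γ₂, xc q < xc p ∧ yc q < yc p + η) :
    ∃ N ∈ 𝓝 (cmap e p), ∃ δ : ℝₗ, 0 < δ ∧
      ∀ q ∈ Γ₂, xc p - δ < xc q → xc q < xc p → cmap e q ∉ N := by
  by_contra hcon
  push_neg at hcon
  set F : Filter (X × X) :=
    𝓟 {q | q ∈ Γ₂ ∧ xc q < xc p} ⊓ comap yc (𝓝 (yc p)) ⊓ comap (cmap e) (𝓝 (cmap e p)) with hF
  have hFne : F.NeBot := by
    rw [← forall_mem_nonempty_iff_neBot]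
    intro s hs
    rw [hF, mem_inf_iff] at hs
    obtain ⟨t₁, ht₁, t₂, ht₂, rfl⟩ := hs
    rw [mem_inf_iff] at ht₁
    obtain ⟨u, hu, v, hv, rfl⟩ := ht₁
    rw [mem_principal] at hu
    obtain ⟨V, hV, hVv⟩ := mem_comap.mp hv
    obtain ⟨η, hη, hIco⟩ := SL.mem_nhds.mp hV
    obtain ⟨N, hN, hNt⟩ := mem_comap.mp ht₂
    obtain ⟨q₀, hq₀Γ, hq₀x, hq₀y⟩ := hgood η hη
    have hδ : (0:ℝₗ) < xc p - xc q₀ := by simp only [sub_pos]; exact hq₀x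
    obtain ⟨q, hq, hq1, hq2, hq3⟩ := hcon N hN (xc p - xc q₀) hδ
    have hx0 : xc q₀ < xc q := by linarith [hq1]
    have hy1 : yc q < yc q₀ := hAC q₀ hq₀Γ q hq hx0
    have hy2 : yc p < yc q := hAC q hq p hp hq2
    refine ⟨q, ⟨hu ⟨hq, hq2⟩, hVv ?_⟩, hNt hq3⟩
    exact mem_preimage.mpr (hIco ⟨le_of_lt hy2, by linarith⟩)
  have hc : Tendsto (cmap e) F (𝓝 (cmap e p)) := tendsto_iff_comap.mpr inf_le_right
  have hy : Tendsto yc F (𝓝 (yc p)) := tendsto_iff_comap.mpr (inf_le_left.trans inf_le_right)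
  have hb : Tendsto (fun q : X × X => phi e q.2) F (𝓝 (phi e p.2)) := phi_tendsto e hy
  have ha : Tendsto (fun q : X × X => phi e q.1) F (𝓝 (phi e p.1)) := by
    have h1 : Tendsto (fun q : X × X => cmap e q * (phi e q.2)⁻¹) F
        (𝓝 (cmap e p * (phi e p.2)⁻¹)) := hc.mul hb.inv
    simpa only [cmap, mul_inv_cancel_right] using h1
  obtain ⟨V, hV, hVsep⟩ := phi_sep e p.1
  have haV : {q : X × X | phi e q.1 ∈ V} ∈ F := ha hV
  have hA : {q : X × X | q ∈ Γ₂ ∧ xc q < xc p} ∈ F :=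
    (inf_le_left.trans inf_le_left : F ≤ 𝓟 _) (mem_principal_self _)
  obtain ⟨q, ⟨hqΓ, hqx⟩, hqV⟩ := Filter.nonempty_of_mem (inter_mem hA haV)
  have h1 : xc p ≤ xc q := hVsep q.1 hqV
  exact absurd h1 (not_le.mpr hqx)
end helpers


/-- If a topological group $G$ contains a subspace homeomorphic to a subspace $X$ of the
Sorgenfrey line and $X \times X$ contains a discrete subspace of cardinality $\kappa^+$ for an
infinite cardinal $\kappa$, then $G$ contains a discrete subspace of cardinality $\kappa^+$;
in particular $s(G) > \kappa$. -/
theorem discrete_succ_of_discrete_in_square {G : Type u} [Group G] [TopologicalSpace G]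
    [IsTopologicalGroup G] (κ : Cardinal.{0}) (hκ : Cardinal.aleph0 ≤ κ)
    (X : Set ℝₗ) (S : Set G) (h : Nonempty (S ≃ₜ X))
    (Γ : Set (X × X)) (hΓ : DiscreteTopology Γ) (hΓκ : Cardinal.mk Γ = Order.succ κ) :
    (∃ D : Set G, DiscreteTopology D ∧ Cardinal.mk D = Cardinal.lift.{u} (Order.succ κ)) ∧
      Cardinal.lift.{u} κ < spread G := by
  obtain ⟨e⟩ := h
  -- Step A : for each point of Γ, a box witnessing discreteness
  have hA : ∀ p : X × X, p ∈ Γ → ∃ ε : ℚ, 0 < (ε : ℝₗ) ∧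
      ∀ q ∈ Γ, xc p ≤ xc q → xc q < xc p + ε → yc p ≤ yc q → yc q < yc p + ε → q = p := by
    intro p hp
    have hsing : {(⟨p, hp⟩ : Γ)} ∈ 𝓝 (⟨p, hp⟩ : Γ) := by
      rw [nhds_discrete]; exact mem_pure.mpr rfl
    rw [mem_nhds_subtype] at hsing
    obtain ⟨U, hU, hUsub⟩ := hsing
    rw [mem_nhds_prod_iff] at hU
    obtain ⟨U₁, hU₁, U₂, hU₂, hUU⟩ := hU
    rw [mem_nhds_subtype] at hU₁ hU₂
    obtain ⟨W₁, hW₁, hW₁sub⟩ := hU₁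
    obtain ⟨W₂, hW₂, hW₂sub⟩ := hU₂
    obtain ⟨δ₁, hδ₁, hI₁⟩ := SL.mem_nhds.mp hW₁
    obtain ⟨δ₂, hδ₂, hI₂⟩ := SL.mem_nhds.mp hW₂
    obtain ⟨ε, hε0, hεlt⟩ := exists_rat_btwn (lt_min hδ₁ hδ₂)
    obtain ⟨hεδ₁, hεδ₂⟩ := lt_min_iff.mp hεlt
    have hI₁' : Ico (xc p) (xc p + δ₁) ⊆ W₁ := hI₁
    have hI₂' : Ico (yc p) (yc p + δ₂) ⊆ W₂ := hI₂
    refine ⟨ε, hε0, ?_⟩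
    intro q hq h1 h2 h3 h4
    have hq1 : q.1 ∈ U₁ := hW₁sub (mem_preimage.mpr (hI₁' ⟨h1, show xc q < xc p + δ₁ by linarith⟩))
    have hq2 : q.2 ∈ U₂ := hW₂sub (mem_preimage.mpr (hI₂' ⟨h3, show yc q < yc p + δ₂ by linarith⟩))
    have : (⟨q, hq⟩ : Γ) ∈ Subtype.val ⁻¹' U := mem_preimage.mpr (hUU ⟨hq1, hq2⟩)
    have := hUsub this
    rw [mem_singleton_iff] at this
    exact congrArg Subtype.val this
  choose! fε hfpos hfC using hA
  -- Step B : uniform ε on a κ⁺-sized subset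
  have hΓbig : Order.succ κ ≤ Cardinal.mk Γ := le_of_eq hΓκ.symm
  obtain ⟨ε₀, hΓ₁big⟩ := big_fiber hκ Γ hΓbig fε
  set Γ₁ : Set (X × X) := {a ∈ Γ | fε a = ε₀} with hΓ₁def
  have hΓ₁Γ : Γ₁ ⊆ Γ := fun a ha => ha.1
  obtain ⟨p₁, hp₁⟩ := nonempty_of_succ_le hΓ₁big
  have hε₀pos : 0 < (ε₀ : ℝₗ) := by
    have := hfpos p₁ hp₁.1
    rwa [hp₁.2] at this
  -- Step C : all points in a small cell
  have hrex : ∀ t : ℝₗ, ∃ q : ℚ, t - (ε₀ : ℝₗ)/2 < q ∧ (q : ℝₗ) < t := by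
    intro t; exact exists_rat_btwn (by linarith)
  choose r hr1 hr2 using hrex
  obtain ⟨v₀, hΓ₂big⟩ := big_fiber hκ Γ₁ hΓ₁big (fun p => (r (xc p), r (yc p)))
  set Γ₂ : Set (X × X) := {a ∈ Γ₁ | (r (xc a), r (yc a)) = v₀} with hΓ₂def
  have hΓ₂Γ₁ : Γ₂ ⊆ Γ₁ := fun a ha => ha.1
  have hclose : ∀ p ∈ Γ₂, ∀ q ∈ Γ₂, xc q < xc p + ε₀ ∧ yc q < yc p + ε₀ := by
    intro p hp q hq
    have e1 : r (xc p) = r (xc q) := by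
      have := hp.2; have h2 := hq.2
      have := congrArg Prod.fst (this.trans h2.symm); simpa using this
    have e2 : r (yc p) = r (yc q) := by
      have := hp.2; have h2 := hq.2
      have := congrArg Prod.snd (this.trans h2.symm); simpa using this
    have c1 := hr1 (xc p); have c2 := hr2 (xc p)
    have c3 := hr1 (xc q); have c4 := hr2 (xc q)
    have c5 := hr1 (yc p); have c6 := hr2 (yc p)
    have c7 := hr1 (yc q); have c8 := hr2 (yc q)
    rw [e1] at c1 c2; rw [e2] at c5 c6
    constructor <;> linarith
  -- antichain structure
  have hnb : ∀ p ∈ Γ₂, ∀ q ∈ Γ₂, q ≠ p → ¬(xc p ≤ xc q ∧ yc p ≤ yc q) := by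
    rintro p hp q hq hne ⟨h1, h2⟩
    have hεp : fε p = ε₀ := (hΓ₂Γ₁ hp).2
    have hq' := hfC p (hΓ₁Γ (hΓ₂Γ₁ hp)) q (hΓ₁Γ (hΓ₂Γ₁ hq)) h1
      (by rw [hεp]; exact (hclose p hp q hq).1) h2 (by rw [hεp]; exact (hclose p hp q hq).2)
    exact hne hq'
  have hAC : ∀ p ∈ Γ₂, ∀ q ∈ Γ₂, xc p < xc q → yc q < yc p := by
    intro p hp q hq hlt
    by_contra hyy
    push_neg at hyy
    have hne : q ≠ p := by rintro rfl; exact lt_irrefl _ hlt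
    exact hnb p hp q hq hne ⟨le_of_lt hlt, hyy⟩
  have hXinj : ∀ p ∈ Γ₂, ∀ q ∈ Γ₂, xc p = xc q → p = q := by
    intro p hp q hq hxe
    by_contra hne
    have h1 := hnb p hp q hq (Ne.symm hne)
    have h2 := hnb q hq p hp hne
    rw [not_and] at h1 h2
    have h3 := h1 (le_of_eq hxe)
    have h4 := h2 (le_of_eq hxe.symm)
    push_neg at h3 h4
    linarith
  -- bad points : jumps of the antichain, countably many
  set bad : X × X → Prop :=
    fun p => ∃ η : ℝₗ, 0 < η ∧ ∀ q ∈ Γ₂, xc q < xc p → yc p + η ≤ yc q with hbaddef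
  set B : Set (X × X) := {p ∈ Γ₂ | bad p} with hBdef
  have hBsmall : Cardinal.mk B ≤ Cardinal.aleph0 := by
    have hη : ∀ p : X × X, p ∈ B → ∃ η : ℝₗ, 0 < η ∧
        ∀ q ∈ Γ₂, xc q < xc p → yc p + η ≤ yc q := fun p hp => hp.2
    choose! η hη1 hη2 using hη
    have hρ : ∀ p : X × X, p ∈ B → ∃ qr : ℚ, yc p < (qr : ℝₗ) ∧ (qr : ℝₗ) < yc p + η p := by
      intro p hp
      exact exists_rat_btwn (by linarith [hη1 p hp])
    choose! ρ hρ1 hρ2 using hρ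
    have hinj : InjOn ρ B := by
      intro p hp p' hp' heq
      by_contra hne
      have hxne : xc p ≠ xc p' := fun hx => hne (hXinj p hp.1 p' hp'.1 hx)
      rcases lt_or_gt_of_ne hxne with hlt | hgt
      · -- xc p < xc p' : use badness of p'
        have h1 := hη2 p' hp' p hp.1 hlt
        have h2 := hρ2 p' hp'
        have h3 := hρ1 p hp
        rw [heq] at h3
        linarith
      · -- xc p' < xc p : use badness of p
        have h1 := hη2 p hp p' hp'.1 hgt
        have h2 := hρ2 p hp
        have h3 := hρ1 p' hp'
        rw [← heq] at h3
        linarith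
    have : Cardinal.mk B ≤ Cardinal.mk ℚ := by
      refine Cardinal.mk_le_of_injective (f := fun p : B => ρ p) ?_
      intro a a' haa
      exact Subtype.ext (hinj a.2 a'.2 haa)
    exact this.trans Cardinal.mk_le_aleph0
  set Γ₃ : Set (X × X) := {p ∈ Γ₂ | ¬ bad p} with hΓ₃def
  have hΓ₃Γ₂ : Γ₃ ⊆ Γ₂ := fun a ha => ha.1
  have hΓ₃big : Order.succ κ ≤ Cardinal.mk Γ₃ := by
    by_contra hlt
    push_neg at hlt
    have h1 : Cardinal.mk Γ₃ ≤ κ := Order.lt_succ_iff.mp hlt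
    have hsub : Γ₂ ⊆ Γ₃ ∪ B := by
      intro p hp
      by_cases hb : bad p
      · exact Or.inr ⟨hp, hb⟩
      · exact Or.inl ⟨hp, hb⟩
    have h2 : Cardinal.mk Γ₂ ≤ Cardinal.mk Γ₃ + Cardinal.mk B :=
      (Cardinal.mk_le_mk_of_subset hsub).trans (Cardinal.mk_union_le _ _)
    have h3 : Cardinal.mk Γ₂ ≤ κ := by
      calc Cardinal.mk Γ₂ ≤ Cardinal.mk Γ₃ + Cardinal.mk B := h2
        _ ≤ κ + Cardinal.aleph0 := add_le_add h1 hBsmall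
        _ ≤ κ + κ := add_le_add le_rfl hκ
        _ = κ := Cardinal.add_eq_self hκ
    exact absurd (hΓ₂big.trans h3) (not_le.mpr (Order.lt_succ κ))
  -- main separation
  have hP : ∀ p : X × X, p ∈ Γ₃ → ∃ N ∈ 𝓝 (cmap e p), ∃ δq : ℚ, 0 < (δq : ℝₗ) ∧
      ∀ q ∈ Γ₂, q ≠ p → xc p - δq < xc q → xc q < xc p + δq → cmap e q ∉ N := by
    intro p hp
    have hp2 : p ∈ Γ₂ := hp.1
    obtain ⟨N₁, hN₁, δ₁, hδ₁, hA'⟩ := claimA e Γ₂ hAC p hp2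
    have hgood : ∀ η : ℝₗ, 0 < η → ∃ q ∈ Γ₂, xc q < xc p ∧ yc q < yc p + η := by
      intro η hη
      by_contra hcon
      push_neg at hcon
      exact hp.2 ⟨η, hη, hcon⟩
    obtain ⟨N₂, hN₂, δ₂, hδ₂, hB'⟩ := claimB e Γ₂ hAC p hp2 hgood
    obtain ⟨δq, hq1, hq2⟩ := exists_rat_btwn (lt_min hδ₁ hδ₂)
    refine ⟨N₁ ∩ N₂, inter_mem hN₁ hN₂, δq, hq1, ?_⟩
    intro q hq hne h1 h2 hmem
    rcases lt_trichotomy (xc q) (xc p) with hlt | heq | hgt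
    · obtain ⟨hd1, hd2⟩ := lt_min_iff.mp hq2
      exact hB' q hq (by linarith) hlt hmem.2
    · exact hne (hXinj q hq p hp2 heq)
    · obtain ⟨hd1, hd2⟩ := lt_min_iff.mp hq2
      exact hA' q hq hgt (by linarith) hmem.1
  choose! N hN δf hδf hsep' using hP
  -- uniform δ
  obtain ⟨δ₀, hΓ₄big⟩ := big_fiber hκ Γ₃ hΓ₃big δf
  set Γ₄ : Set (X × X) := {a ∈ Γ₃ | δf a = δ₀} with hΓ₄def
  have hΓ₄Γ₃ : Γ₄ ⊆ Γ₃ := fun a ha => ha.1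
  obtain ⟨p₄, hp₄⟩ := nonempty_of_succ_le hΓ₄big
  have hδ₀pos : 0 < (δ₀ : ℝₗ) := by
    have := hδf p₄ hp₄.1
    rwa [hp₄.2] at this
  -- all x-coordinates close together
  have hr'ex : ∀ t : ℝₗ, ∃ q : ℚ, t - (δ₀ : ℝₗ)/2 < q ∧ (q : ℝₗ) < t := by
    intro t; exact exists_rat_btwn (by linarith)
  choose r' hr'1 hr'2 using hr'ex
  obtain ⟨w₀, hΓ₅big⟩ := big_fiber hκ Γ₄ hΓ₄big (fun p => r' (xc p))
  set Γ₅ : Set (X × X) := {a ∈ Γ₄ | r' (xc a) = w₀} with hΓ₅def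
  have hΓ₅Γ₄ : Γ₅ ⊆ Γ₄ := fun a ha => ha.1
  have hclose₅ : ∀ p ∈ Γ₅, ∀ q ∈ Γ₅, xc p - δ₀ < xc q ∧ xc q < xc p + δ₀ := by
    intro p hp q hq
    have e1 : r' (xc p) = r' (xc q) := hp.2.trans hq.2.symm
    have c1 := hr'1 (xc p); have c2 := hr'2 (xc p)
    have c3 := hr'1 (xc q); have c4 := hr'2 (xc q)
    rw [e1] at c1 c2
    constructor <;> linarith
  have hΓ₅Γ₂ : Γ₅ ⊆ Γ₂ := fun a ha => hΓ₃Γ₂ (hΓ₄Γ₃ (hΓ₅Γ₄ ha))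
  have hΓ₅Γ : Γ₅ ⊆ Γ := fun a ha => hΓ₁Γ (hΓ₂Γ₁ (hΓ₅Γ₂ ha))
  -- the separation, specialized to Γ₅
  have hsep₅ : ∀ p ∈ Γ₅, ∀ q ∈ Γ₅, q ≠ p → cmap e q ∉ N p := by
    intro p hp q hq hne
    have hp₃ : p ∈ Γ₃ := hΓ₄Γ₃ (hΓ₅Γ₄ hp)
    have hδp : δf p = δ₀ := (hΓ₅Γ₄ hp).2
    have hcl := hclose₅ p hp q hq
    exact hsep' p hp₃ q (hΓ₅Γ₂ hq) hne (by rw [hδp]; exact hcl.1) (by rw [hδp]; exact hcl.2)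
  have hmemN : ∀ p ∈ Γ₅, cmap e p ∈ N p := fun p hp =>
    mem_of_mem_nhds (hN p (hΓ₄Γ₃ (hΓ₅Γ₄ hp)))
  have hinj : InjOn (cmap e) Γ₅ := by
    intro p hp q hq heq
    by_contra hne
    exact hsep₅ p hp q hq (Ne.symm hne) (heq ▸ hmemN p hp)
  set D : Set G := cmap e '' Γ₅ with hDdef
  have hDdisc : DiscreteTopology D := by
    rw [discreteTopology_iff_nhds]
    intro d
    refine le_antisymm ?_ (pure_le_nhds d)
    rw [le_pure_iff]
    obtain ⟨p, hp, hpd⟩ := d.2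
    rw [mem_nhds_subtype]
    refine ⟨N p, by rw [← hpd]; exact hN p (hΓ₄Γ₃ (hΓ₅Γ₄ hp)), ?_⟩
    intro d' hd'
    obtain ⟨q, hq, hqd⟩ := d'.2
    rw [mem_singleton_iff]
    by_cases hqp : q = p
    · apply Subtype.ext
      rw [← hqd, ← hpd, hqp]
    · refine absurd ?_ (hsep₅ p hp q hq hqp)
      show cmap e q ∈ N p
      rw [hqd]
      exact hd'
  have hΓ₅card : Cardinal.mk Γ₅ = Order.succ κ :=
    le_antisymm (hΓκ ▸ Cardinal.mk_le_mk_of_subset hΓ₅Γ) hΓ₅big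
  have hDcard : Cardinal.mk D = Cardinal.lift.{u} (Order.succ κ) := by
    have h1 := Cardinal.mk_image_eq_of_injOn_lift (cmap e) Γ₅ hinj
    rw [hΓ₅card] at h1
    simpa using h1
  refine ⟨⟨D, hDdisc, hDcard⟩, ?_⟩
  have hmem : Cardinal.lift.{u} (Order.succ κ) ∈
      {c : Cardinal | ∃ D : Set G, DiscreteTopology D ∧ Cardinal.mk D = c} := ⟨D, hDdisc, hDcard⟩
  have hbdd : BddAbove {c : Cardinal | ∃ D : Set G, DiscreteTopology D ∧ Cardinal.mk D = c} := by
    refine ⟨Cardinal.mk G, ?_⟩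
    rintro c ⟨D', _, rfl⟩
    exact Cardinal.mk_set_le D'
  calc Cardinal.lift.{u} κ < Cardinal.lift.{u} (Order.succ κ) :=
        Cardinal.lift_lt.mpr (Order.lt_succ κ)
    _ ≤ spread G := le_csSup hbdd hmem
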